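/- Let p, q ∈ (0,1/2). In the cumulative-teaching model with ε-majority learning, for every ε ∈ (0,1), the student's learning rate R_cum(ε) = limsup_{n→∞} −(1/n) log P(Θ̂_n^{(ε)} ≠ +1) satisfies R_cum(ε) ≥ min( (1−ε)·D(1/2‖p), ε·D(1/2‖q) ). Consequently, sup_{ε∈(0,1)} R_cum(ε) ≥ D(1/2‖p)·D(1/2‖q) / ( D(1/2‖p) + D(1/2‖q) ), i.e., the learning rate of cumulative teaching with optimally chosen ε-majority learning is at least as large as the optimized learning rate of the ε-teaching strategy. -/

import Mathlib

open MeasureTheory ProbabilityTheory Filter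

noncomputable section

/-- Kullback–Leibler divergence `D(1/2 ‖ p)` between Bernoulli(1/2) and Bernoulli(p). -/
def Dhalf (p : ℝ) : ℝ := (1/2) * Real.log ((1/2)/p) + (1/2) * Real.log ((1/2)/(1-p))

variable {Ω : Type*} [MeasurableSpace Ω]

/-- The random walk `X_n = Y_1 + ⋯ + Y_n` (here the steps are indexed `Y 0, Y 1, …`). -/
def walk (Y : ℕ → Ω → ℤ) (n : ℕ) (ω : Ω) : ℤ := ∑ i ∈ Finset.range n, Y i ω

/-- The sign process `X̂_n`: `+1` if `X_n > 0`, `-1` if `X_n < 0`, previous value if `X_n = 0`,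
with `X̂_0 = +1`. -/
def sgnProc (Y : ℕ → Ω → ℤ) : ℕ → Ω → ℤ
  | 0 => fun _ => 1
  | n+1 => fun ω =>
      if 0 < walk Y (n+1) ω then 1
      else if walk Y (n+1) ω < 0 then -1
      else sgnProc Y n ω

/-- `M_n = #{1 ≤ i ≤ n : X̂_i = +1}`. -/
def Mcount (Y : ℕ → Ω → ℤ) (n : ℕ) (ω : Ω) : ℕ :=
  ((Finset.Icc 1 n).filter fun i => sgnProc Y i ω = 1).card

/-- The error event of the cumulative-teaching + ε-majority-learning strategy at horizon `n`:
the student receives `Z_i = X̂_i · N_i` and estimates `Θ̂_n^{(ε)} = +1` iff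
`#{⌈(1−ε)n⌉ ≤ i ≤ n : Z_i = +1} ≥ ⌊εn⌋/2`; the event is `Θ̂_n^{(ε)} ≠ +1`. -/
def cumErr (Y N : ℕ → Ω → ℤ) (ε : ℝ) (n : ℕ) : Set Ω :=
  {ω | ¬ ((⌊ε * (n:ℝ)⌋₊ : ℝ)/2 ≤
      (((Finset.Icc ⌈(1-ε) * (n:ℝ)⌉₊ n).filter
        fun i => sgnProc Y i ω * N i ω = 1).card : ℝ))}

/-! ### Auxiliary lemmas -/

lemma exp_neg_Dhalf {p : ℝ} (hp0 : 0 < p) (hp1 : p < 1) :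
    Real.exp (-(Dhalf p)) = 2 * Real.sqrt (p * (1-p)) := by
  have h1p : 0 < 1 - p := by linarith
  have hpp : 0 < p * (1-p) := mul_pos hp0 h1p
  have key : -(Dhalf p) = Real.log 2 + Real.log (Real.sqrt (p * (1-p))) := by
    rw [Dhalf, Real.log_div (by norm_num) hp0.ne', Real.log_div (by norm_num) h1p.ne',
      Real.log_sqrt hpp.le, Real.log_mul hp0.ne' h1p.ne']
    have h2 : Real.log (1/2) = -Real.log 2 := by rw [one_div, Real.log_inv]
    rw [h2]; ring
  rw [key, Real.exp_add, Real.exp_log two_pos, Real.exp_log (Real.sqrt_pos.2 hpp)]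

lemma Dhalf_pos {p : ℝ} (hp0 : 0 < p) (hp1 : p < 1/2) : 0 < Dhalf p := by
  have h1 : Real.exp (-(Dhalf p)) < 1 := by
    rw [exp_neg_Dhalf hp0 (by linarith)]
    have h : Real.sqrt (p * (1-p)) < 1/2 := by
      rw [show (1:ℝ)/2 = Real.sqrt ((1/2)^2) by rw [Real.sqrt_sq]; norm_num]
      apply Real.sqrt_lt_sqrt (by nlinarith)
      nlinarith
    linarith
  by_contra h
  push_neg at h
  have := Real.one_le_exp (by linarith : (0:ℝ) ≤ -(Dhalf p))
  linarith

lemma iIndepFun_precomp {ι ι' : Type*} {β : Type*} [mβ : MeasurableSpace β] {μ : Measure Ω}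
    {f : ι → Ω → β} (g : ι' → ι) (hg : Function.Injective g)
    (h : iIndepFun f μ) :
    iIndepFun (fun j => f (g j)) μ := by
  classical
  rw [iIndepFun_iff_measure_inter_preimage_eq_mul] at h ⊢
  intro S sets H
  have key := h (S.map ⟨g, hg⟩)
    (sets := Function.extend g sets (fun _ => Set.univ)) ?_
  · rw [Finset.prod_map] at key
    have h1 : (⋂ i ∈ S.map ⟨g, hg⟩, f i ⁻¹' Function.extend g sets (fun _ => Set.univ) i)
        = ⋂ j ∈ S, f (g j) ⁻¹' sets j := by
      ext ω
      simp only [Set.mem_iInter, Finset.mem_map, Function.Embedding.coeFn_mk]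
      constructor
      · intro hh j hj
        have := hh (g j) ⟨j, hj, rfl⟩
        rwa [hg.extend_apply] at this
      · rintro hh i ⟨j, hj, rfl⟩
        rw [hg.extend_apply]
        exact hh j hj
    rw [h1] at key
    rw [key]
    refine Finset.prod_congr rfl fun j hj => ?_
    simp only [Function.Embedding.coeFn_mk]
    rw [hg.extend_apply]
  · intro i hi
    rw [Finset.mem_map] at hi
    obtain ⟨j, hj, rfl⟩ := hi
    simp only [Function.Embedding.coeFn_mk]
    rw [hg.extend_apply]
    exact H j hj

lemma compl_dist {μ : Measure Ω} [IsProbabilityMeasure μ] {X : Ω → ℤ} (hX : Measurable X)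
    (hrange : ∀ ω, X ω = 1 ∨ X ω = -1) {r : ℝ} (hr0 : 0 ≤ r)
    (hdist : μ {ω | X ω = 1} = ENNReal.ofReal r) :
    μ {ω | X ω = -1} = ENNReal.ofReal (1-r) := by
  have hc : {ω | X ω = -1} = {ω | X ω = 1}ᶜ := by
    ext ω; rcases hrange ω with h | h <;> simp [h]
  have hm : MeasurableSet {ω | X ω = 1} := hX (measurableSet_singleton 1)
  rw [hc, measure_compl hm (measure_ne_top _ _), hdist, measure_univ,
    ← ENNReal.ofReal_one, ← ENNReal.ofReal_sub _ hr0]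

lemma compl_dist' {μ : Measure Ω} [IsProbabilityMeasure μ] {X : Ω → ℤ} (hX : Measurable X)
    (hrange : ∀ ω, X ω = 1 ∨ X ω = -1) {r : ℝ} (hr0 : 0 ≤ r)
    (hdist : μ {ω | X ω = -1} = ENNReal.ofReal r) :
    μ {ω | X ω = 1} = ENNReal.ofReal (1-r) := by
  have hc : {ω | X ω = 1} = {ω | X ω = -1}ᶜ := by
    ext ω; rcases hrange ω with h | h <;> simp [h]
  have hm : MeasurableSet {ω | X ω = -1} := hX (measurableSet_singleton (-1))
  rw [hc, measure_compl hm (measure_ne_top _ _), hdist, measure_univ,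
    ← ENNReal.ofReal_one, ← ENNReal.ofReal_sub _ hr0]

lemma mgf_pm_one {μ : Measure Ω} [IsProbabilityMeasure μ] {X : Ω → ℤ} (hX : Measurable X)
    (hrange : ∀ ω, X ω = 1 ∨ X ω = -1) {r : ℝ} (hr0 : 0 ≤ r) (hr1 : r ≤ 1)
    (hdist : μ {ω | X ω = 1} = ENNReal.ofReal r) (t : ℝ) :
    mgf (fun ω => (X ω : ℝ)) μ t = r * Real.exp t + (1-r) * Real.exp (-t) := by
  have hm : MeasurableSet {ω | X ω = 1} := hX (measurableSet_singleton 1)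
  have hfun : (fun ω => Real.exp (t * (X ω : ℝ)))
      = fun ω => Set.indicator {ω | X ω = 1} (fun _ => Real.exp t) ω
        + Set.indicator {ω | X ω = 1}ᶜ (fun _ => Real.exp (-t)) ω := by
    funext ω
    rcases hrange ω with h | h <;>
      simp [h, Set.indicator_apply, mul_comm]
  rw [mgf, hfun, integral_add
      ((integrable_indicator_iff hm).2 integrableOn_const)
      ((integrable_indicator_iff hm.compl).2 integrableOn_const),
    integral_indicator_const _ hm, integral_indicator_const _ hm.compl]
  have h2 : μ {ω | X ω = 1}ᶜ = ENNReal.ofReal (1-r) := by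
    have := compl_dist hX hrange hr0 hdist
    rw [← this]; congr 1
    ext ω; rcases hrange ω with h | h <;> simp [h]
  rw [measureReal_def, measureReal_def, hdist, h2, ENNReal.toReal_ofReal hr0, ENNReal.toReal_ofReal (by linarith)]
  simp [smul_eq_mul]

lemma chernoff_pm {μ : Measure Ω} [IsProbabilityMeasure μ] {X : ℕ → Ω → ℤ}
    (hmeas : ∀ i, Measurable (X i)) (hrange : ∀ i ω, X i ω = 1 ∨ X i ω = -1)
    {r : ℝ} (hr : 1/2 ≤ r) (hr1 : r < 1)
    (hdist : ∀ i, μ {ω | X i ω = 1} = ENNReal.ofReal r)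
    (hindep : iIndepFun (fun i => fun ω => (X i ω : ℝ)) μ)
    (s : Finset ℕ) {a : ℝ} (ha : a ≤ 0) :
    (μ {ω | ∑ i ∈ s, (X i ω : ℝ) ≤ a}).toReal ≤ (2 * Real.sqrt (r * (1-r)))^s.card := by
  have hr0 : 0 < r := by linarith
  have h1r : 0 < 1 - r := by linarith
  set t := Real.log (Real.sqrt ((1-r)/r)) with htdef
  have hsq : 0 < Real.sqrt ((1-r)/r) := Real.sqrt_pos.2 (div_pos h1r hr0)
  have het : Real.exp t = Real.sqrt ((1-r)/r) := Real.exp_log hsq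
  have hent : Real.exp (-t) = Real.sqrt (r/(1-r)) := by
    rw [Real.exp_neg, het, ← Real.sqrt_inv, inv_div]
  have ht : t ≤ 0 := Real.log_nonpos hsq.le
    (Real.sqrt_le_one.2 (by rw [div_le_one hr0]; linarith))
  have hmgf : ∀ i : ℕ, mgf (fun ω => (X i ω : ℝ)) μ t = 2 * Real.sqrt (r * (1-r)) := by
    intro i
    rw [mgf_pm_one (hmeas i) (hrange i) hr0.le hr1.le (hdist i) t, het, hent]
    rw [Real.sqrt_div h1r.le, Real.sqrt_div hr0.le]
    rw [show r * (Real.sqrt (1-r) / Real.sqrt r) = (r / Real.sqrt r) * Real.sqrt (1-r) by ring,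
      show (1-r) * (Real.sqrt r / Real.sqrt (1-r)) = ((1-r) / Real.sqrt (1-r)) * Real.sqrt r
        by ring,
      Real.div_sqrt, Real.div_sqrt, Real.sqrt_mul hr0.le]
    ring
  have hcastm : ∀ i : ℕ, Measurable (fun ω => (X i ω : ℝ)) := fun i =>
    (Measurable.of_discrete (f := (Int.cast : ℤ → ℝ))).comp (hmeas i)
  have hmS : Measurable (fun ω => ∑ i ∈ s, (X i ω : ℝ)) :=
    Finset.measurable_sum s fun i _ => hcastm i
  have hintS : Integrable (fun ω => Real.exp (t * ∑ i ∈ s, (X i ω : ℝ))) μ := by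
    refine Integrable.mono' (integrable_const (Real.exp (|t| * s.card)))
      ((hmS.const_mul t).exp.aestronglyMeasurable) (ae_of_all _ fun ω => ?_)
    rw [Real.norm_eq_abs, Real.abs_exp]
    apply Real.exp_le_exp.2
    calc t * ∑ i ∈ s, (X i ω : ℝ) ≤ |t * ∑ i ∈ s, (X i ω : ℝ)| := le_abs_self _
    _ = |t| * |∑ i ∈ s, (X i ω : ℝ)| := abs_mul _ _
    _ ≤ |t| * s.card := by
        refine mul_le_mul_of_nonneg_left ?_ (abs_nonneg t)
        calc |∑ i ∈ s, (X i ω : ℝ)| ≤ ∑ i ∈ s, |(X i ω : ℝ)| := Finset.abs_sum_le_sum_abs _ _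
        _ ≤ ∑ i ∈ s, 1 := Finset.sum_le_sum fun i _ => by
              rcases hrange i ω with h | h <;> simp [h]
        _ = s.card := by simp
  have hset : {ω | (∑ i ∈ s, fun ω => (X i ω : ℝ)) ω ≤ a} = {ω | ∑ i ∈ s, (X i ω : ℝ) ≤ a} := by
    ext ω; simp [Finset.sum_apply]
  have hint2 : Integrable (fun ω => Real.exp (t * (∑ i ∈ s, fun ω => (X i ω : ℝ)) ω)) μ := by
    simpa [Finset.sum_apply] using hintS
  have hch := measure_le_le_exp_mul_mgf (μ := μ) (X := ∑ i ∈ s, fun ω => (X i ω : ℝ)) a ht hint2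
  rw [hset, hindep.mgf_sum hcastm s] at hch
  calc (μ {ω | ∑ i ∈ s, (X i ω : ℝ) ≤ a}).toReal
      ≤ Real.exp (-t * a) * ∏ i ∈ s, mgf (fun ω => (X i ω : ℝ)) μ t := hch
  _ ≤ 1 * ∏ i ∈ s, mgf (fun ω => (X i ω : ℝ)) μ t := by
      refine mul_le_mul_of_nonneg_right (Real.exp_le_one_iff.2 (mul_nonpos_iff.2 ?_))
        (Finset.prod_nonneg fun i _ => mgf_nonneg)
      left; constructor <;> [linarith; exact ha]
  _ = (2 * Real.sqrt (r * (1-r)))^s.card := by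
      rw [one_mul, Finset.prod_congr rfl fun i _ => hmgf i, Finset.prod_const]

lemma cover (Y N : ℕ → Ω → ℤ) (hNrange : ∀ i ω, N i ω = 1 ∨ N i ω = -1) (ε : ℝ) (n : ℕ) :
    cumErr Y N ε n ⊆
      (⋃ i ∈ Finset.Icc ⌈(1-ε)*(n:ℝ)⌉₊ n, {ω | ∑ j ∈ Finset.range i, (Y j ω : ℝ) ≤ 0})
      ∪ {ω | ∑ i ∈ Finset.Icc ⌈(1-ε)*(n:ℝ)⌉₊ n, (N i ω : ℝ) ≤
          (⌊ε*(n:ℝ)⌋₊ : ℝ) - ((Finset.Icc ⌈(1-ε)*(n:ℝ)⌉₊ n).card : ℝ)} := by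
  classical
  intro ω hω
  set m := ⌈(1-ε)*(n:ℝ)⌉₊ with hm
  rw [Set.mem_union]
  by_contra hc
  push_neg at hc
  obtain ⟨hU, hB⟩ := hc
  simp only [Set.mem_iUnion, Set.mem_setOf_eq, not_exists, not_le] at hU hB
  have hpos : ∀ i ∈ Finset.Icc m n, 0 < walk Y i ω := by
    intro i hi
    have h := hU i hi
    have : ((walk Y i ω : ℤ) : ℝ) = ∑ j ∈ Finset.range i, (Y j ω : ℝ) := by
      rw [walk]; push_cast; rfl
    have h2 : (0:ℝ) < ((walk Y i ω : ℤ) : ℝ) := by rw [this]; exact h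
    exact_mod_cast h2
  have hsgn : ∀ i ∈ Finset.Icc m n, sgnProc Y i ω = 1 := by
    intro i hi
    match i with
    | 0 => rfl
    | Nat.succ j =>
      show (if 0 < walk Y (j+1) ω then 1 else if walk Y (j+1) ω < 0 then -1
        else sgnProc Y j ω) = 1
      rw [if_pos (hpos (j+1) hi)]
  have hfeq : (Finset.Icc m n).filter (fun i => sgnProc Y i ω * N i ω = 1)
      = (Finset.Icc m n).filter (fun i => N i ω = 1) := by
    refine Finset.filter_congr fun i hi => ?_
    rw [hsgn i hi, one_mul]
  rw [cumErr, Set.mem_setOf_eq, hfeq, not_le] at hω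
  set c := ((Finset.Icc m n).filter (fun i => N i ω = 1)).card with hcdef
  set L := (Finset.Icc m n).card with hL
  have hsum : ∑ i ∈ Finset.Icc m n, (N i ω : ℝ) = (c:ℝ) - ((L:ℝ) - c) := by
    rw [← Finset.sum_filter_add_sum_filter_not (Finset.Icc m n) (fun i => N i ω = 1)]
    have h1 : ∑ i ∈ (Finset.Icc m n).filter (fun i => N i ω = 1), (N i ω : ℝ) = (c:ℝ) := by
      rw [Finset.sum_congr rfl (fun i hi => ?_), Finset.sum_const, hcdef, nsmul_eq_mul, mul_one]
      rw [(Finset.mem_filter.1 hi).2]; norm_num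
    have h2 : ∑ i ∈ (Finset.Icc m n).filter (fun i => ¬ N i ω = 1), (N i ω : ℝ)
        = -(((Finset.Icc m n).filter (fun i => ¬ N i ω = 1)).card : ℝ) := by
      rw [Finset.sum_congr rfl (fun i hi => ?_), Finset.sum_const, nsmul_eq_mul, mul_neg_one]
      have := (Finset.mem_filter.1 hi).2
      rcases hNrange i ω with h | h
      · exact absurd h this
      · rw [h]; norm_num
    rw [h1, h2]
    have h3 : ((Finset.Icc m n).filter (fun i => ¬ N i ω = 1)).card = L - c := by
      have := Finset.card_filter_add_card_filter_not
        (s := Finset.Icc m n) (p := fun i => N i ω = 1)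
      omega
    rw [h3]
    have hcL : c ≤ L := Finset.card_filter_le _ _
    push_cast [Nat.cast_sub hcL]
    ring
  have hB' := hB
  rw [hsum] at hB'
  have hk : (c:ℝ) < (⌊ε*(n:ℝ)⌋₊:ℝ)/2 := hω
  linarith

lemma errUpper {μ : Measure Ω} [IsProbabilityMeasure μ] {p q ε : ℝ}
    (hp : p ∈ Set.Ioo (0:ℝ) (1/2)) (hq : q ∈ Set.Ioo (0:ℝ) (1/2)) (hε : ε ∈ Set.Ioo (0:ℝ) 1)
    {Y N : ℕ → Ω → ℤ}
    (hYmeas : ∀ i, Measurable (Y i)) (hNmeas : ∀ i, Measurable (N i))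
    (hYrange : ∀ i ω, Y i ω = 1 ∨ Y i ω = -1)
    (hNrange : ∀ i ω, N i ω = 1 ∨ N i ω = -1)
    (hYdist : ∀ i, μ {ω | Y i ω = 1} = ENNReal.ofReal (1 - p))
    (hNdist1 : ∀ i, μ {ω | N i ω = 1} = ENNReal.ofReal (1 - q))
    (hYindep : iIndepFun (fun i => fun ω => (Y i ω : ℝ)) μ)
    (hNindep : iIndepFun (fun i => fun ω => (N i ω : ℝ)) μ)
    (n : ℕ) :
    (μ (cumErr Y N ε n)).toReal ≤
      ((n:ℝ)+2) * Real.exp (-((n:ℝ) * min ((1-ε)*Dhalf p) (ε*Dhalf q))) := by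
  obtain ⟨hp0, hp1⟩ := hp
  obtain ⟨hq0, hq1⟩ := hq
  obtain ⟨hε0, hε1⟩ := hε
  have hDp := Dhalf_pos hp0 hp1
  have hDq := Dhalf_pos hq0 hq1
  set m := ⌈(1-ε)*(n:ℝ)⌉₊ with hmdef
  set k := ⌊ε*(n:ℝ)⌋₊ with hkdef
  set s := Finset.Icc m n with hsdef
  set L := s.card with hLdef
  have hmn : m ≤ n := Nat.ceil_le.2 (by nlinarith [Nat.cast_nonneg (α := ℝ) n])
  have hLcard : L = n + 1 - m := Nat.card_Icc m n
  have hLreal : (L:ℝ) = (n:ℝ) + 1 - m := by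
    rw [hLcard, Nat.cast_sub (by omega)]; push_cast; ring
  have hmlow : (1-ε)*(n:ℝ) ≤ (m:ℝ) := Nat.le_ceil _
  have hmupp : (m:ℝ) < (1-ε)*(n:ℝ) + 1 :=
    Nat.ceil_lt_add_one (by nlinarith [Nat.cast_nonneg (α := ℝ) n])
  have hLge : ε*(n:ℝ) ≤ (L:ℝ) := by rw [hLreal]; linarith
  have hkle : (k:ℝ) ≤ ε*(n:ℝ) := Nat.floor_le (by positivity)
  have ha : (k:ℝ) - (L:ℝ) ≤ 0 := by linarith
  set mink := min ((1-ε)*Dhalf p) (ε*Dhalf q) with hminkdef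
  set U := ⋃ i ∈ s, {ω | ∑ j ∈ Finset.range i, (Y j ω : ℝ) ≤ 0} with hUdef
  set B := {ω | ∑ i ∈ s, (N i ω : ℝ) ≤ (k:ℝ) - (L:ℝ)} with hBdef
  have hcov : μ (cumErr Y N ε n) ≤ μ U + μ B :=
    (measure_mono (cover Y N hNrange ε n)).trans (measure_union_le _ _)
  have h1 : (μ (cumErr Y N ε n)).toReal ≤ (μ U).toReal + (μ B).toReal := by
    calc (μ (cumErr Y N ε n)).toReal ≤ (μ U + μ B).toReal :=
          ENNReal.toReal_mono (ENNReal.add_ne_top.2 ⟨measure_ne_top _ _, measure_ne_top _ _⟩) hcov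
    _ = (μ U).toReal + (μ B).toReal :=
          ENNReal.toReal_add (measure_ne_top _ _) (measure_ne_top _ _)
  have hUsum : (μ U).toReal
      ≤ ∑ i ∈ s, (μ {ω | ∑ j ∈ Finset.range i, (Y j ω : ℝ) ≤ 0}).toReal := by
    calc (μ U).toReal ≤ (∑ i ∈ s, μ {ω | ∑ j ∈ Finset.range i, (Y j ω : ℝ) ≤ 0}).toReal :=
          ENNReal.toReal_mono (by
            refine (ENNReal.sum_lt_top.2 fun i _ => measure_lt_top _ _).ne)
            (measure_biUnion_finset_le _ _)
    _ = _ := ENNReal.toReal_sum fun i _ => measure_ne_top _ _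
  have hEp : (2 * Real.sqrt ((1-p) * (1-(1-p)))) = Real.exp (-(Dhalf p)) := by
    rw [exp_neg_Dhalf hp0 (by linarith), show 1-(1-p) = p by ring, mul_comm (1-p) p]
  have hEq : (2 * Real.sqrt ((1-q) * (1-(1-q)))) = Real.exp (-(Dhalf q)) := by
    rw [exp_neg_Dhalf hq0 (by linarith), show 1-(1-q) = q by ring, mul_comm (1-q) q]
  have hterm : ∀ i ∈ s, (μ {ω | ∑ j ∈ Finset.range i, (Y j ω : ℝ) ≤ 0}).toReal
      ≤ Real.exp (-((n:ℝ) * mink)) := by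
    intro i hi
    have hch := chernoff_pm hYmeas hYrange (r := 1-p) (by linarith) (by linarith)
      hYdist hYindep (Finset.range i) (a := 0) le_rfl
    rw [Finset.card_range, hEp] at hch
    calc (μ {ω | ∑ j ∈ Finset.range i, (Y j ω : ℝ) ≤ 0}).toReal
        ≤ Real.exp (-(Dhalf p)) ^ i := hch
    _ = Real.exp (-((i:ℝ) * Dhalf p)) := by
        rw [← Real.exp_nat_mul]; ring_nf
    _ ≤ Real.exp (-((n:ℝ) * mink)) := by
        apply Real.exp_le_exp.2
        have him : m ≤ i := (Finset.mem_Icc.1 hi).1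
        have : (n:ℝ) * mink ≤ (i:ℝ) * Dhalf p := by
          calc (n:ℝ) * mink ≤ (n:ℝ) * ((1-ε)*Dhalf p) := by
                apply mul_le_mul_of_nonneg_left (min_le_left _ _) (Nat.cast_nonneg n)
          _ = ((1-ε)*(n:ℝ)) * Dhalf p := by ring
          _ ≤ (m:ℝ) * Dhalf p := mul_le_mul_of_nonneg_right hmlow hDp.le
          _ ≤ (i:ℝ) * Dhalf p := by
                apply mul_le_mul_of_nonneg_right (Nat.cast_le.2 him) hDp.le
        linarith
  have hU2 : (μ U).toReal ≤ ((n:ℝ)+1) * Real.exp (-((n:ℝ) * mink)) := by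
    calc (μ U).toReal
        ≤ ∑ i ∈ s, (μ {ω | ∑ j ∈ Finset.range i, (Y j ω : ℝ) ≤ 0}).toReal := hUsum
    _ ≤ ∑ _i ∈ s, Real.exp (-((n:ℝ) * mink)) := Finset.sum_le_sum hterm
    _ = (L:ℝ) * Real.exp (-((n:ℝ) * mink)) := by rw [Finset.sum_const, hLdef, nsmul_eq_mul]
    _ ≤ ((n:ℝ)+1) * Real.exp (-((n:ℝ) * mink)) := by
        apply mul_le_mul_of_nonneg_right _ (Real.exp_pos _).le
        rw [hLreal]; linarith
  have hB2 : (μ B).toReal ≤ Real.exp (-((n:ℝ) * mink)) := by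
    have hch := chernoff_pm hNmeas hNrange (r := 1-q) (by linarith) (by linarith)
      hNdist1 hNindep s ha
    rw [hEq] at hch
    calc (μ B).toReal ≤ Real.exp (-(Dhalf q)) ^ L := hch
    _ = Real.exp (-((L:ℝ) * Dhalf q)) := by rw [← Real.exp_nat_mul]; ring_nf
    _ ≤ Real.exp (-((n:ℝ) * mink)) := by
        apply Real.exp_le_exp.2
        have : (n:ℝ) * mink ≤ (L:ℝ) * Dhalf q := by
          calc (n:ℝ) * mink ≤ (n:ℝ) * (ε*Dhalf q) := by
                apply mul_le_mul_of_nonneg_left (min_le_right _ _) (Nat.cast_nonneg n)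
          _ = (ε*(n:ℝ)) * Dhalf q := by ring
          _ ≤ (L:ℝ) * Dhalf q := mul_le_mul_of_nonneg_right hLge hDq.le
        linarith
  calc (μ (cumErr Y N ε n)).toReal ≤ (μ U).toReal + (μ B).toReal := h1
  _ ≤ ((n:ℝ)+1) * Real.exp (-((n:ℝ) * mink)) + Real.exp (-((n:ℝ) * mink)) :=
      add_le_add hU2 hB2
  _ = ((n:ℝ)+2) * Real.exp (-((n:ℝ) * mink)) := by ring

lemma errLower {μ : Measure Ω} [IsProbabilityMeasure μ] {p q ε : ℝ}
    (hp : p ∈ Set.Ioo (0:ℝ) (1/2)) (hq : q ∈ Set.Ioo (0:ℝ) (1/2)) (hε : ε ∈ Set.Ioo (0:ℝ) 1)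
    {Y N : ℕ → Ω → ℤ}
    (hYdist : ∀ i, μ {ω | Y i ω = 1} = ENNReal.ofReal (1 - p))
    (hNdist : ∀ i, μ {ω | N i ω = -1} = ENNReal.ofReal q)
    (hindep : iIndepFun (Sum.elim Y N) μ)
    (n : ℕ) (hn : 1 ≤ n) (hεn : 1 ≤ ε * n) :
    (1-p)^n * q^(n+1) ≤ (μ (cumErr Y N ε n)).toReal := by
  classical
  obtain ⟨hp0, hp1⟩ := hp
  obtain ⟨hq0, hq1⟩ := hq
  obtain ⟨hε0, hε1⟩ := hε
  set m := ⌈(1-ε)*(n:ℝ)⌉₊ with hmdef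
  set s := Finset.Icc m n with hsdef
  set L := s.card with hLdef
  have hmn : m ≤ n := Nat.ceil_le.2 (by nlinarith [Nat.cast_nonneg (α := ℝ) n])
  have hLn : L ≤ n + 1 := by rw [hLdef, hsdef, Nat.card_Icc]; omega
  set E := (⋂ i ∈ Finset.range n, Y i ⁻¹' ({1} : Set ℤ)) ∩
    ⋂ i ∈ s, N i ⁻¹' ({-1} : Set ℤ) with hEdef
  have hsub : E ⊆ cumErr Y N ε n := by
    intro ω hω
    obtain ⟨hY, hN⟩ := hω
    simp only [Set.mem_iInter, Set.mem_preimage, Set.mem_singleton_iff] at hY hN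
    have hwalk : ∀ i, i ≤ n → walk Y i ω = i := by
      intro i hi
      rw [walk, Finset.sum_congr rfl (fun j hj => hY j (by
        rw [Finset.mem_range] at hj ⊢; omega)), Finset.sum_const, Finset.card_range]
      simp
    have hsgn : ∀ i ∈ s, sgnProc Y i ω = 1 := by
      intro i hi
      match i with
      | 0 => rfl
      | Nat.succ j =>
        show (if 0 < walk Y (j+1) ω then 1 else if walk Y (j+1) ω < 0 then -1
          else sgnProc Y j ω) = 1
        rw [if_pos]
        rw [hwalk (j+1) (Finset.mem_Icc.1 hi).2]
        positivity
    have hfilt : s.filter (fun i => sgnProc Y i ω * N i ω = 1) = ∅ := by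
      refine Finset.filter_false_of_mem fun i hi => ?_
      rw [hsgn i hi, hN i hi]
      norm_num
    rw [cumErr, Set.mem_setOf_eq, hfilt]
    simp only [Finset.card_empty, Nat.cast_zero, not_le]
    have hk1 : 1 ≤ ⌊ε*(n:ℝ)⌋₊ := Nat.le_floor (by exact_mod_cast hεn)
    have : (1:ℝ) ≤ (⌊ε*(n:ℝ)⌋₊ : ℝ) := by exact_mod_cast hk1
    linarith
  have hdisj : Disjoint ((Finset.range n).map ⟨Sum.inl, Sum.inl_injective⟩)
      (s.map ⟨Sum.inr, Sum.inr_injective⟩) := by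
    rw [Finset.disjoint_left]
    rintro a ha hb
    rw [Finset.mem_map] at ha hb
    obtain ⟨i, _, rfl⟩ := ha
    obtain ⟨j, _, h⟩ := hb
    simp at h
  set S := ((Finset.range n).map ⟨Sum.inl, Sum.inl_injective⟩) ∪
    (s.map ⟨Sum.inr, Sum.inr_injective⟩) with hSdef
  set sets : ℕ ⊕ ℕ → Set ℤ := Sum.elim (fun _ => ({1} : Set ℤ)) (fun _ => ({-1} : Set ℤ))
    with hsetsdef
  have key := hindep.measure_inter_preimage_eq_mul S (sets := sets) (fun i _ => trivial)
  have hIeq : (⋂ i ∈ S, Sum.elim Y N i ⁻¹' sets i) = E := by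
    rw [hSdef]
    ext ω
    constructor
    · intro h
      have h' := Set.mem_iInter₂.1 h
      refine ⟨Set.mem_iInter₂.2 fun i hi => ?_, Set.mem_iInter₂.2 fun i hi => ?_⟩
      · exact h' (Sum.inl i) (Finset.mem_union_left _
          (Finset.mem_map.2 ⟨i, hi, rfl⟩))
      · exact h' (Sum.inr i) (Finset.mem_union_right _
          (Finset.mem_map.2 ⟨i, hi, rfl⟩))
    · rintro ⟨h1, h2⟩
      refine Set.mem_iInter₂.2 fun j hj => ?_
      rcases Finset.mem_union.1 hj with hj' | hj' <;>
        obtain ⟨i, hi, rfl⟩ := Finset.mem_map.1 hj'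
      · exact Set.mem_iInter₂.1 h1 i hi
      · exact Set.mem_iInter₂.1 h2 i hi
  have hprod : ∏ i ∈ S, μ (Sum.elim Y N i ⁻¹' sets i)
      = (ENNReal.ofReal (1-p))^n * (ENNReal.ofReal q)^L := by
    rw [hSdef, Finset.prod_union hdisj, Finset.prod_map, Finset.prod_map]
    congr 1
    · rw [Finset.prod_congr rfl (fun i _ => ?_), Finset.prod_const, Finset.card_range]
      show μ (Y i ⁻¹' {1}) = ENNReal.ofReal (1-p)
      rw [show Y i ⁻¹' ({1} : Set ℤ) = {ω | Y i ω = 1} from rfl]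
      exact hYdist i
    · rw [Finset.prod_congr rfl (fun i _ => ?_), Finset.prod_const]
      show μ (N i ⁻¹' {-1}) = ENNReal.ofReal q
      rw [show N i ⁻¹' ({-1} : Set ℤ) = {ω | N i ω = -1} from rfl]
      exact hNdist i
  have hE : μ E = (ENNReal.ofReal (1-p))^n * (ENNReal.ofReal q)^L := by
    rw [← hIeq, key, hprod]
  have hEreal : (μ E).toReal = (1-p)^n * q^L := by
    rw [hE, ENNReal.toReal_mul, ENNReal.toReal_pow, ENNReal.toReal_pow,
      ENNReal.toReal_ofReal (by linarith), ENNReal.toReal_ofReal hq0.le]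
  calc (1-p)^n * q^(n+1) ≤ (1-p)^n * q^L := by
        apply mul_le_mul_of_nonneg_left _ (pow_nonneg (by linarith) n)
        exact pow_le_pow_of_le_one hq0.le (by linarith) hLn
  _ = (μ E).toReal := hEreal.symm
  _ ≤ (μ (cumErr Y N ε n)).toReal :=
      ENNReal.toReal_mono (measure_ne_top _ _) (measure_mono hsub)

theorem stmt8
    (μ : Measure Ω) [IsProbabilityMeasure μ]
    (p q : ℝ) (hp : p ∈ Set.Ioo (0:ℝ) (1/2)) (hq : q ∈ Set.Ioo (0:ℝ) (1/2))
    (Y N : ℕ → Ω → ℤ)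
    (hYmeas : ∀ i, Measurable (Y i)) (hNmeas : ∀ i, Measurable (N i))
    (hYrange : ∀ i ω, Y i ω = 1 ∨ Y i ω = -1)
    (hNrange : ∀ i ω, N i ω = 1 ∨ N i ω = -1)
    (hYdist : ∀ i, μ {ω | Y i ω = 1} = ENNReal.ofReal (1 - p))
    (hNdist : ∀ i, μ {ω | N i ω = -1} = ENNReal.ofReal q)
    (hindep : iIndepFun (Sum.elim Y N) μ) :
    (∀ ε ∈ Set.Ioo (0:ℝ) 1,
      min ((1-ε) * Dhalf p) (ε * Dhalf q) ≤
        Filter.limsup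
          (fun n : ℕ => -(Real.log ((μ (cumErr Y N ε n)).toReal)) / (n : ℝ)) atTop) ∧
    Dhalf p * Dhalf q / (Dhalf p + Dhalf q) ≤
      sSup ((fun ε => Filter.limsup
          (fun n : ℕ => -(Real.log ((μ (cumErr Y N ε n)).toReal)) / (n : ℝ)) atTop)
        '' Set.Ioo (0:ℝ) 1) := by
  obtain ⟨hp0, hp1⟩ := hp
  obtain ⟨hq0, hq1⟩ := hq
  have hDp := Dhalf_pos hp0 hp1
  have hDq := Dhalf_pos hq0 hq1
  -- independence of the components
  have hNdist1 : ∀ i, μ {ω | N i ω = 1} = ENNReal.ofReal (1 - q) := fun i =>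
    compl_dist' (hNmeas i) (hNrange i) hq0.le (hNdist i)
  have hYi : iIndepFun Y μ :=
    iIndepFun_precomp Sum.inl Sum.inl_injective hindep
  have hNi : iIndepFun N μ :=
    iIndepFun_precomp Sum.inr Sum.inr_injective hindep
  have hYindep : iIndepFun (fun i => fun ω => (Y i ω : ℝ)) μ :=
    hYi.comp (fun _ => (Int.cast : ℤ → ℝ)) (fun _ => Measurable.of_discrete)
  have hNindep : iIndepFun (fun i => fun ω => (N i ω : ℝ)) μ :=
    hNi.comp (fun _ => (Int.cast : ℤ → ℝ)) (fun _ => Measurable.of_discrete)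
  set C : ℝ := -Real.log (1-p) - 2*Real.log q with hCdef
  have hlogq : Real.log q < 0 := Real.log_neg hq0 (by linarith)
  have hlog1p : Real.log (1-p) ≤ 0 := Real.log_nonpos (by linarith) (by linarith)
  -- the key claim, for each ε
  have key : ∀ ε ∈ Set.Ioo (0:ℝ) 1,
      min ((1-ε) * Dhalf p) (ε * Dhalf q) ≤
        Filter.limsup
          (fun n : ℕ => -(Real.log ((μ (cumErr Y N ε n)).toReal)) / (n : ℝ)) atTop ∧
      Filter.limsup
          (fun n : ℕ => -(Real.log ((μ (cumErr Y N ε n)).toReal)) / (n : ℝ)) atTop ≤ C := by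
    intro ε hε
    obtain ⟨hε0, hε1⟩ := hε
    set f : ℕ → ℝ := fun n => -(Real.log ((μ (cumErr Y N ε n)).toReal)) / (n : ℝ) with hfdef
    set K := min ((1-ε)*Dhalf p) (ε*Dhalf q) with hKdef
    have hKpos : 0 < K := lt_min (by nlinarith) (by nlinarith)
    have hf0 : ∀ n, 0 ≤ f n := by
      intro n
      apply div_nonneg _ (Nat.cast_nonneg n)
      rw [neg_nonneg]
      apply Real.log_nonpos ENNReal.toReal_nonneg
      calc (μ (cumErr Y N ε n)).toReal ≤ (1 : ENNReal).toReal :=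
            ENNReal.toReal_mono (by simp) prob_le_one
      _ = 1 := by simp
    -- eventual upper bound
    have hCb : ∀ᶠ n in atTop, f n ≤ C := by
      filter_upwards [eventually_ge_atTop (max 1 ⌈1/ε⌉₊)] with n hn
      have hn1 : 1 ≤ n := le_trans (le_max_left _ _) hn
      have hn1' : (1:ℝ) ≤ (n:ℝ) := by exact_mod_cast hn1
      have hεn : 1 ≤ ε * n := by
        have h2 : ((⌈1/ε⌉₊ : ℕ) : ℝ) ≤ (n:ℝ) :=
          Nat.cast_le.2 (le_trans (le_max_right _ _) hn)
        have h3 : 1/ε ≤ (n:ℝ) := le_trans (Nat.le_ceil _) h2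
        rw [div_le_iff₀ hε0] at h3
        linarith
      have hlow := errLower ⟨hp0, hp1⟩ ⟨hq0, hq1⟩ ⟨hε0, hε1⟩ hYdist hNdist hindep n hn1 hεn
      have h1p : (0:ℝ) < 1-p := by linarith
      have hlb0 : (0:ℝ) < (1-p)^n * q^(n+1) := by positivity
      have hloglb : Real.log ((1-p)^n * q^(n+1)) ≤ Real.log ((μ (cumErr Y N ε n)).toReal) :=
        Real.log_le_log hlb0 hlow
      have hnpos : (0:ℝ) < (n:ℝ) := by linarith
      have h5 : Real.log ((1-p)^n * q^(n+1))
          = (n:ℝ) * Real.log (1-p) + ((n:ℝ)+1) * Real.log q := by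
        rw [Real.log_mul (pow_ne_zero _ h1p.ne') (pow_ne_zero _ hq0.ne'),
          Real.log_pow, Real.log_pow]
        push_cast; ring
      have h6 : -(Real.log ((1-p)^n * q^(n+1))) ≤ (n:ℝ) * C := by
        rw [h5, hCdef]; nlinarith
      calc f n ≤ -(Real.log ((1-p)^n * q^(n+1))) / (n:ℝ) :=
            div_le_div_of_nonneg_right (by linarith) hnpos.le
      _ ≤ C := by rw [div_le_iff₀ hnpos]; linarith [h6]
    have hbdd : IsBoundedUnder (· ≤ ·) atTop f := isBoundedUnder_of_eventually_le hCb
    have hcob : IsCoboundedUnder (· ≤ ·) atTop f := isCoboundedUnder_le_of_le atTop hf0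
    refine ⟨?_, limsup_le_of_le hcob hCb⟩
    -- eventual lower bound
    have hflow : ∀ᶠ n : ℕ in atTop, K - Real.log ((n:ℝ)+2)/(n:ℝ) ≤ f n := by
      filter_upwards [eventually_ge_atTop (max 1 ⌈1/ε⌉₊)] with n hn
      have hn1 : 1 ≤ n := le_trans (le_max_left _ _) hn
      have hn1' : (1:ℝ) ≤ (n:ℝ) := by exact_mod_cast hn1
      have hnpos : (0:ℝ) < (n:ℝ) := by linarith
      have hεn : 1 ≤ ε * n := by
        have h2 : ((⌈1/ε⌉₊ : ℕ) : ℝ) ≤ (n:ℝ) :=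
          Nat.cast_le.2 (le_trans (le_max_right _ _) hn)
        have h3 : 1/ε ≤ (n:ℝ) := le_trans (Nat.le_ceil _) h2
        rw [div_le_iff₀ hε0] at h3
        linarith
      have hup := errUpper ⟨hp0, hp1⟩ ⟨hq0, hq1⟩ ⟨hε0, hε1⟩ hYmeas hNmeas hYrange hNrange
        hYdist hNdist1 hYindep hNindep n
      have hlow := errLower ⟨hp0, hp1⟩ ⟨hq0, hq1⟩ ⟨hε0, hε1⟩ hYdist hNdist hindep n hn1 hεn
      have h1p : (0:ℝ) < 1-p := by linarith
      have hlb0 : (0:ℝ) < (1-p)^n * q^(n+1) := by positivity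
      have hP0 : (0:ℝ) < (μ (cumErr Y N ε n)).toReal := lt_of_lt_of_le hlb0 hlow
      have hlog : Real.log ((μ (cumErr Y N ε n)).toReal)
          ≤ Real.log (((n:ℝ)+2) * Real.exp (-((n:ℝ)*K))) := Real.log_le_log hP0 hup
      have h8 : Real.log (((n:ℝ)+2) * Real.exp (-((n:ℝ)*K)))
          = Real.log ((n:ℝ)+2) - (n:ℝ)*K := by
        rw [Real.log_mul (by positivity) (Real.exp_ne_zero _), Real.log_exp]; ring
      rw [h8] at hlog
      have h9 : ((n:ℝ)*K - Real.log ((n:ℝ)+2))/(n:ℝ) ≤ f n :=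
        div_le_div_of_nonneg_right (by linarith) hnpos.le
      have h10 : ((n:ℝ)*K - Real.log ((n:ℝ)+2))/(n:ℝ) = K - Real.log ((n:ℝ)+2)/(n:ℝ) := by
        field_simp
      linarith [h9, h10 ▸ h9]
    have htend : Tendsto (fun n:ℕ => Real.log ((n:ℝ)+2)/(n:ℝ)) atTop (nhds 0) := by
      have h1 : Tendsto (fun x:ℝ => Real.log x / x) atTop (nhds 0) :=
        Real.isLittleO_log_id_atTop.tendsto_div_nhds_zero
      have h2 : Tendsto (fun n:ℕ => (n:ℝ)+2) atTop atTop :=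
        tendsto_atTop_add_const_right atTop 2 tendsto_natCast_atTop_atTop
      have h3 : Tendsto (fun n:ℕ => Real.log ((n:ℝ)+2)/((n:ℝ)+2)) atTop (nhds 0) :=
        h1.comp h2
      have h4 : Tendsto (fun n:ℕ => ((n:ℝ)+2)/(n:ℝ)) atTop (nhds 1) := by
        have h5 : Tendsto (fun n:ℕ => 1 + 2/(n:ℝ)) atTop (nhds 1) := by
          have := tendsto_const_div_atTop_nhds_zero_nat (2:ℝ)
          simpa using tendsto_const_nhds.add this
        apply h5.congr'
        filter_upwards [eventually_ge_atTop 1] with n hn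
        have hnpos : (0:ℝ) < (n:ℝ) := by exact_mod_cast hn
        field_simp
      have h6 := h3.mul h4
      rw [zero_mul] at h6
      apply h6.congr'
      filter_upwards [eventually_ge_atTop 1] with n hn
      have hn1' : (1:ℝ) ≤ (n:ℝ) := by exact_mod_cast hn
      have hnpos : (0:ℝ) < (n:ℝ) := by linarith
      field_simp
    refine le_of_forall_lt fun b hb => ?_
    obtain ⟨c, hbc, hcK⟩ := exists_between hb
    have hsmall : ∀ᶠ n : ℕ in atTop, Real.log ((n:ℝ)+2)/(n:ℝ) < K - c := by
      have h0 : (0:ℝ) < K - c := by linarith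
      exact htend.eventually (gt_mem_nhds h0)
    have hev : ∀ᶠ n in atTop, c ≤ f n := by
      filter_upwards [hflow, hsmall] with n h1 h2
      linarith
    exact lt_of_lt_of_le hbc (le_limsup_of_frequently_le hev.frequently hbdd)
  constructor
  · exact fun ε hε => (key ε hε).1
  · set R : ℝ → ℝ := fun ε => Filter.limsup
      (fun n : ℕ => -(Real.log ((μ (cumErr Y N ε n)).toReal)) / (n : ℝ)) atTop with hRdef
    have hBdd : BddAbove (R '' Set.Ioo (0:ℝ) 1) := by
      refine ⟨C, ?_⟩
      rintro x ⟨ε, hε, rfl⟩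
      exact (key ε hε).2
    set εs := Dhalf p / (Dhalf p + Dhalf q) with hεsdef
    have hsum : 0 < Dhalf p + Dhalf q := by linarith
    have hεs : εs ∈ Set.Ioo (0:ℝ) 1 := by
      constructor
      · exact div_pos hDp hsum
      · rw [div_lt_one hsum]; linarith
    have h1 : (1-εs)*Dhalf p = Dhalf p * Dhalf q / (Dhalf p + Dhalf q) := by
      rw [hεsdef]; field_simp; ring
    have h2 : εs*Dhalf q = Dhalf p * Dhalf q / (Dhalf p + Dhalf q) := by
      rw [hεsdef]; field_simp
    have h3 : min ((1-εs)*Dhalf p) (εs*Dhalf q) = Dhalf p * Dhalf q / (Dhalf p + Dhalf q) := by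
      rw [h1, h2, min_self]
    calc Dhalf p * Dhalf q / (Dhalf p + Dhalf q)
        = min ((1-εs)*Dhalf p) (εs*Dhalf q) := h3.symm
    _ ≤ R εs := (key εs hεs).1
    _ ≤ sSup (R '' Set.Ioo (0:ℝ) 1) := le_csSup hBdd ⟨εs, hεs, rfl⟩
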